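/- With f as in the Eckardt case (f(u,v) = u-v on {u∈[0,2], v∈[0,u]}, f(u,v) = (6-u)/2 - v on {u∈[2,4], v∈[0,(6-u)/2]}), we have (3/22) ∫∫ f^2 dv du + (6/22) ∫_2^4 ∫_0^{(6-u)/2} f(u,v)·((u-2)/2) dv du = 17/22. -/

import Mathlib

open MeasureTheory intervalIntegral

lemma poly_int (a b : ℝ) (F f : ℝ → ℝ)
    (hd : ∀ x : ℝ, HasDerivAt F (f x) x) (hc : Continuous f) :
    ∫ u in a..b, f u = F b - F a :=
  integral_eq_sub_of_hasDerivAt (fun x _ => hd x) (hc.intervalIntegrable a b)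

lemma innerA (c : ℝ) : (∫ v in (0:ℝ)..c, (c-v)^2) = c^3/3 := by
  have h := poly_int 0 c (fun v => -((c-v)^3/3)) (fun v => (c-v)^2)
    (fun x => by
      have h1 : HasDerivAt (fun v : ℝ => c - v) (-1) x := (hasDerivAt_id x).const_sub c
      have h2 := ((h1.pow 3).div_const 3).neg
      exact h2.congr_deriv (by ring))
    (by continuity)
  rw [h]; ring

lemma innerB (c k : ℝ) : (∫ v in (0:ℝ)..c, (c-v)*k) = c^2/2*k := by
  have h := poly_int 0 c (fun v => -((c-v)^2/2*k)) (fun v => (c-v)*k)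
    (fun x => by
      have h1 : HasDerivAt (fun v : ℝ => c - v) (-1) x := (hasDerivAt_id x).const_sub c
      have h2 := (((h1.pow 2).div_const 2).mul_const k).neg
      exact h2.congr_deriv (by ring))
    (by continuity)
  rw [h]; ring

theorem stmt_17 :
    (3/22 : ℝ) *
      ((∫ u in (0:ℝ)..2, ∫ v in (0:ℝ)..u, (u-v)^2) +
       (∫ u in (2:ℝ)..4, ∫ v in (0:ℝ)..((6-u)/2), ((6-u)/2 - v)^2)) +
    (6/22 : ℝ) *
      (∫ u in (2:ℝ)..4, ∫ v in (0:ℝ)..((6-u)/2), ((6-u)/2 - v) * ((u-2)/2))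
    = 17/22 := by
  simp only [innerA, innerB]
  have e1 : (∫ u in (0:ℝ)..2, u^3/3) = 4/3 := by
    rw [poly_int 0 2 (fun u => u^4/12) _ (fun x => by
      have := (hasDerivAt_pow 4 x).div_const 12
      exact this.congr_deriv (by ring)) (by continuity)]
    norm_num
  have e2 : (∫ u in (2:ℝ)..4, ((6-u)/2)^3/3) = 5/2 := by
    rw [poly_int 2 4 (fun u => -(((6-u)/2)^4/6)) _ (fun x => by
      have h1 : HasDerivAt (fun u : ℝ => (6 - u)/2) (-1/2) x := by
        have := ((hasDerivAt_id x).const_sub 6).div_const 2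
        exact this.congr_deriv (by ring)
      have := ((h1.pow 4).div_const 6).neg
      exact this.congr_deriv (by ring)) (by continuity)]
    norm_num
  have e3 : (∫ u in (2:ℝ)..4, ((6-u)/2)^2/2 * ((u-2)/2)) = 11/12 := by
    rw [poly_int 2 4 (fun u => u^4/64 - 14*u^3/48 + 30*u^2/16 - 72*u/16) _ (fun x => by
      have h1 := ((((hasDerivAt_pow 4 x).div_const 64).sub
        (((hasDerivAt_pow 3 x).const_mul 14).div_const 48)).add
        (((hasDerivAt_pow 2 x).const_mul 30).div_const 16)).sub
        (((hasDerivAt_id x).const_mul 72).div_const 16)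
      exact h1.congr_deriv (by ring)) (by continuity)]
    norm_num
  rw [e1, e2, e3]
  norm_num
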